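/- arXiv:1810.01183 — 2 statements merged into one kernel-verified Lean document; each statement's English description precedes it below -/
import Mathlib

section
/- Let d ≥ 1, σ ≥ 0 and M > 0. Let K(t,s), for 0 < s < t < ∞, be bounded linear operators on L^2(ℝ^d;ℂ) such that ‖K(t,s)‖ ≤ M for all t > s > 0 and such that (t,s) ↦ K(t,s)u is strongly measurable on {(t,s) : 0 < s < t} for each u ∈ L^2(ℝ^d;ℂ). Let f : (0,∞) → L^2(ℝ^d;ℂ) be strongly measurable with ∫_0^∞ ‖f(s)‖_{L^2}^2 s^{−1−σ} ds < ∞. Then for every t > 0 the Bochner integral u(t) := ∫_0^t K(t,s) f(s) ds exists in L^2(ℝ^d;ℂ), and there is a constant C depending only on σ such that ∫_0^∞ ‖u(t)‖_{L^2}^2 t^{−3−σ} dt ≤ C M^2 ∫_0^∞ ‖f(s)‖_{L^2}^2 s^{−1−σ} ds. -/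
open MeasureTheory
open scoped ENNReal

private lemma aux_clm_apply_sm {E F : Type*} [NormedAddCommGroup E] [NormedSpace ℂ E]
    [NormedAddCommGroup F] [NormedSpace ℂ F]
    (T : ℝ → E →L[ℂ] F) (hT : ∀ u : E, StronglyMeasurable fun s => T s u)
    (f : ℝ → E) (hf : StronglyMeasurable f) :
    StronglyMeasurable fun s => T s (f s) := by
  have hsimple : ∀ φ : SimpleFunc ℝ E, StronglyMeasurable fun s => T s (φ s) := by
    intro φ
    refine SimpleFunc.induction ?_ ?_ φ
    · intro c s hs
      have he : (fun x => T x ((SimpleFunc.piecewise s hs (SimpleFunc.const ℝ c)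
          (SimpleFunc.const ℝ 0)) x)) = s.indicator fun x => T x c := by
        funext x
        by_cases h : x ∈ s <;>
          simp [SimpleFunc.piecewise_apply, Set.indicator_of_mem, Set.indicator_of_notMem, h]
      rw [he]
      exact (hT c).indicator hs
    · intro φ ψ _ hφ hψ
      have he : (fun x => T x ((φ + ψ) x)) = fun x => T x (φ x) + T x (ψ x) := by
        funext x; simp [map_add]
      rw [he]
      exact hφ.add hψ
  exact stronglyMeasurable_of_tendsto Filter.atTop (fun n => hsimple (hf.approx n))
    (tendsto_pi_nhds.2 fun x => ((T x).continuous.tendsto _).comp (hf.tendsto_approx x))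

private lemma aux_CS {X : Type*} [MeasurableSpace X] (μ : Measure X) {f g : X → ℝ≥0∞}
    (hf : AEMeasurable f μ) (hg : AEMeasurable g μ) :
    (∫⁻ s, f s * g s ∂μ) ^ 2 ≤ (∫⁻ s, f s ^ 2 ∂μ) * (∫⁻ s, g s ^ 2 ∂μ) := by
  have h2 : Real.HolderConjugate 2 2 := Real.HolderConjugate.two_two
  have h := ENNReal.lintegral_mul_le_Lp_mul_Lq μ h2 hf hg
  have h' := ENNReal.rpow_le_rpow h (by norm_num : (0:ℝ) ≤ 2)
  have e : ∀ x : ℝ≥0∞, x ^ (2:ℝ) = x ^ (2:ℕ) := fun x => by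
    rw [show ((2:ℝ)) = ((2:ℕ):ℝ) by norm_num, ENNReal.rpow_natCast]
  calc (∫⁻ s, f s * g s ∂μ) ^ (2:ℕ)
      = (∫⁻ s, (f * g) s ∂μ) ^ (2:ℝ) := by rw [e]; rfl
    _ ≤ ((∫⁻ s, f s ^ (2:ℝ) ∂μ) ^ (1/2:ℝ) * (∫⁻ s, g s ^ (2:ℝ) ∂μ) ^ (1/2:ℝ)) ^ (2:ℝ) := h'
    _ = (∫⁻ s, f s ^ (2:ℕ) ∂μ) * (∫⁻ s, g s ^ (2:ℕ) ∂μ) := by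
        rw [ENNReal.mul_rpow_of_nonneg _ _ (by norm_num : (0:ℝ) ≤ 2),
          ← ENNReal.rpow_mul, ← ENNReal.rpow_mul]
        simp_rw [e]
        norm_num

set_option maxHeartbeats 1000000 in
/-- **Boundedness of the deterministic maximal regularity operator
`𝓜_K f(t) = ∫_0^t K(t,s) f(s) ds` from `T^{2,2}_σ` to `T^{2,2}_{σ+2}`**
(Proposition 6.6 of Portal–Veraar), for an arbitrary uniformly bounded, strongly
measurable family `{K(t,s) : t > s > 0}` of bounded operators on `L^2(ℝ^d;ℂ)`, using
the identification `T^{2,2}_τ = L^2(ℝ_+ × ℝ^d, dt dx / t^{1+τ})`.  The constant `C`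
depends only on `σ`. -/
theorem maximal_regularity_T22
    (σ : ℝ) (hσ : 0 ≤ σ) :
    ∃ C : ℝ, 0 < C ∧
      ∀ (d : ℕ), 1 ≤ d → ∀ (M : ℝ), 0 < M →
      ∀ K : ℝ → ℝ → (Lp ℂ 2 (volume : Measure (EuclideanSpace ℝ (Fin d))))
          →L[ℂ] Lp ℂ 2 (volume : Measure (EuclideanSpace ℝ (Fin d))),
        (∀ t s : ℝ, 0 < s → s < t → ‖K t s‖ ≤ M) →
        (∀ u : Lp ℂ 2 (volume : Measure (EuclideanSpace ℝ (Fin d))),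
          StronglyMeasurable fun q : {q : ℝ × ℝ // 0 < q.2 ∧ q.2 < q.1} =>
            K q.1.1 q.1.2 u) →
        ∀ f : ℝ → Lp ℂ 2 (volume : Measure (EuclideanSpace ℝ (Fin d))),
          StronglyMeasurable f →
          (∫⁻ s in Set.Ioi (0 : ℝ), ENNReal.ofReal (‖f s‖ ^ 2 * s ^ (-1 - σ))) < ⊤ →
          (∀ t : ℝ, 0 < t →
            IntegrableOn (fun s : ℝ => K t s (f s)) (Set.Ioo 0 t) volume) ∧
          ∫⁻ t in Set.Ioi (0 : ℝ),
              ENNReal.ofReal (‖∫ s in Set.Ioo (0 : ℝ) t, K t s (f s)‖ ^ 2 * t ^ (-3 - σ))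
            ≤ ENNReal.ofReal (C * M ^ 2) *
                ∫⁻ s in Set.Ioi (0 : ℝ), ENNReal.ofReal (‖f s‖ ^ 2 * s ^ (-1 - σ)) := by
  have h1σ : (0:ℝ) < 1 + σ := by linarith
  set α : ℝ := (1 + σ) / 2 with hα
  have hαpos : 0 < α := by rw [hα]; linarith
  refine ⟨2 / (1 + σ), by positivity, ?_⟩
  intro d hd M hM K hKM hKmeas f hf hF
  -- pointwise norm bound
  have hnorm : ∀ t : ℝ, 0 < t → ∀ s ∈ Set.Ioo (0:ℝ) t, ‖K t s (f s)‖ ≤ M * ‖f s‖ := by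
    intro t ht s hs
    calc ‖K t s (f s)‖ ≤ ‖K t s‖ * ‖f s‖ := (K t s).le_opNorm _
      _ ≤ M * ‖f s‖ := mul_le_mul_of_nonneg_right (hKM t s hs.1 hs.2) (norm_nonneg _)
  -- the weighted inner integral is controlled by the data
  have hHt : ∀ t : ℝ, 0 < t →
      (∫⁻ s in Set.Ioo (0:ℝ) t, ENNReal.ofReal (‖f s‖ ^ 2 * s ^ (-α)))
        ≤ ENNReal.ofReal (t ^ α) *
            ∫⁻ s in Set.Ioi (0:ℝ), ENNReal.ofReal (‖f s‖ ^ 2 * s ^ (-1 - σ)) := by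
    intro t ht
    have h1 : ∀ s ∈ Set.Ioo (0:ℝ) t, ENNReal.ofReal (‖f s‖ ^ 2 * s ^ (-α))
        ≤ ENNReal.ofReal (t ^ α) * ENNReal.ofReal (‖f s‖ ^ 2 * s ^ (-1 - σ)) := by
      intro s hs
      rw [← ENNReal.ofReal_mul (Real.rpow_nonneg ht.le _)]
      apply ENNReal.ofReal_le_ofReal
      have e1 : s ^ (-α) = s ^ α * s ^ (-1 - σ) := by
        rw [← Real.rpow_add hs.1]
        congr 1
        rw [hα]; ring
      have e2 : s ^ α ≤ t ^ α := Real.rpow_le_rpow hs.1.le hs.2.le hαpos.le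
      have e3 : (0:ℝ) ≤ s ^ (-1-σ) := Real.rpow_nonneg hs.1.le _
      calc ‖f s‖^2 * s ^ (-α) = (s ^ α) * (‖f s‖^2 * s^(-1-σ)) := by rw [e1]; ring
        _ ≤ t ^ α * (‖f s‖^2 * s^(-1-σ)) :=
            mul_le_mul_of_nonneg_right e2 (by positivity)
    calc ∫⁻ s in Set.Ioo (0:ℝ) t, ENNReal.ofReal (‖f s‖ ^ 2 * s ^ (-α))
        ≤ ∫⁻ s in Set.Ioo (0:ℝ) t,
            ENNReal.ofReal (t ^ α) * ENNReal.ofReal (‖f s‖ ^ 2 * s ^ (-1 - σ)) :=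
          lintegral_mono_ae ((ae_restrict_iff' measurableSet_Ioo).2
            (Filter.Eventually.of_forall h1))
      _ = ENNReal.ofReal (t ^ α) *
            ∫⁻ s in Set.Ioo (0:ℝ) t, ENNReal.ofReal (‖f s‖ ^ 2 * s ^ (-1 - σ)) :=
          lintegral_const_mul' _ _ ENNReal.ofReal_ne_top
      _ ≤ _ := mul_le_mul_right (lintegral_mono_set Set.Ioo_subset_Ioi_self) _
  have hHtfin : ∀ t : ℝ, 0 < t →
      (∫⁻ s in Set.Ioo (0:ℝ) t, ENNReal.ofReal (‖f s‖ ^ 2 * s ^ (-α))) < ⊤ :=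
    fun t ht => (hHt t ht).trans_lt (ENNReal.mul_lt_top ENNReal.ofReal_lt_top hF)
  -- Cauchy–Schwarz
  have hCS : ∀ t : ℝ, 0 < t →
      (∫⁻ s in Set.Ioo (0:ℝ) t, ENNReal.ofReal ‖f s‖) ^ 2
        ≤ (ENNReal.ofReal (t ^ α) * ENNReal.ofReal t) *
          ∫⁻ s in Set.Ioo (0:ℝ) t, ENNReal.ofReal (‖f s‖ ^ 2 * s ^ (-α)) := by
    intro t ht
    have hmeas1 : AEMeasurable (fun s : ℝ => ENNReal.ofReal (s ^ (α/2)))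
        (volume.restrict (Set.Ioo 0 t)) :=
      ((measurable_id.pow measurable_const).ennreal_ofReal).aemeasurable
    have hmeas2 : AEMeasurable (fun s : ℝ => ENNReal.ofReal (‖f s‖ * s ^ (-(α/2))))
        (volume.restrict (Set.Ioo 0 t)) :=
      ((hf.norm.measurable.mul (measurable_id.pow measurable_const)).ennreal_ofReal).aemeasurable
    have key := aux_CS (volume.restrict (Set.Ioo 0 t)) hmeas1 hmeas2
    have e0 : ∫⁻ s in Set.Ioo (0:ℝ) t,
        ENNReal.ofReal (s ^ (α/2)) * ENNReal.ofReal (‖f s‖ * s ^ (-(α/2)))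
        = ∫⁻ s in Set.Ioo (0:ℝ) t, ENNReal.ofReal ‖f s‖ := by
      refine setLIntegral_congr_fun_ae measurableSet_Ioo (Filter.Eventually.of_forall fun s hs => ?_)
      rw [← ENNReal.ofReal_mul (Real.rpow_nonneg hs.1.le _)]
      congr 1
      have h0 : s ^ (α/2) * s ^ (-(α/2)) = 1 := by
        rw [← Real.rpow_add hs.1]; simp
      calc s ^ (α/2) * (‖f s‖ * s ^ (-(α/2))) = ‖f s‖ * (s ^ (α/2) * s ^ (-(α/2))) := by ring
        _ = ‖f s‖ := by rw [h0, mul_one]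
    have e1 : ∫⁻ s in Set.Ioo (0:ℝ) t, ENNReal.ofReal (s ^ (α/2)) ^ 2
        = ∫⁻ s in Set.Ioo (0:ℝ) t, ENNReal.ofReal (s ^ α) := by
      refine setLIntegral_congr_fun_ae measurableSet_Ioo (Filter.Eventually.of_forall fun s hs => ?_)
      rw [← ENNReal.ofReal_pow (Real.rpow_nonneg hs.1.le _)]
      congr 1
      rw [← Real.rpow_natCast (s ^ (α/2)) 2, ← Real.rpow_mul hs.1.le]
      norm_num
    have e2 : ∫⁻ s in Set.Ioo (0:ℝ) t, ENNReal.ofReal (‖f s‖ * s ^ (-(α/2))) ^ 2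
        = ∫⁻ s in Set.Ioo (0:ℝ) t, ENNReal.ofReal (‖f s‖ ^ 2 * s ^ (-α)) := by
      refine setLIntegral_congr_fun_ae measurableSet_Ioo (Filter.Eventually.of_forall fun s hs => ?_)
      rw [← ENNReal.ofReal_pow (mul_nonneg (norm_nonneg _) (Real.rpow_nonneg hs.1.le _))]
      congr 1
      rw [mul_pow]
      congr 1
      rw [← Real.rpow_natCast (s ^ (-(α/2))) 2, ← Real.rpow_mul hs.1.le]
      norm_num
    have e1b : ∫⁻ s in Set.Ioo (0:ℝ) t, ENNReal.ofReal (s ^ α)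
        ≤ ENNReal.ofReal (t ^ α) * ENNReal.ofReal t := by
      calc ∫⁻ s in Set.Ioo (0:ℝ) t, ENNReal.ofReal (s ^ α)
          ≤ ∫⁻ _ in Set.Ioo (0:ℝ) t, ENNReal.ofReal (t ^ α) :=
            lintegral_mono_ae ((ae_restrict_iff' measurableSet_Ioo).2
              (Filter.Eventually.of_forall fun s hs =>
                ENNReal.ofReal_le_ofReal (Real.rpow_le_rpow hs.1.le hs.2.le hαpos.le)))
        _ = ENNReal.ofReal (t ^ α) * ENNReal.ofReal t := by
            rw [setLIntegral_const, Real.volume_Ioo, sub_zero]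
    rw [e0, e1, e2] at key
    exact key.trans (mul_le_mul_left e1b _)
  -- key per-time facts: integrability and bound on the L² norm of the output
  have hKey : ∀ t : ℝ, 0 < t →
      IntegrableOn (fun s : ℝ => K t s (f s)) (Set.Ioo 0 t) volume ∧
      ENNReal.ofReal ‖∫ s in Set.Ioo (0:ℝ) t, K t s (f s)‖
        ≤ ENNReal.ofReal M * ∫⁻ s in Set.Ioo (0:ℝ) t, ENNReal.ofReal ‖f s‖ := by
    intro t ht
    -- measurability
    have hgmem : ∀ s : ℝ, 0 < (if s ∈ Set.Ioo (0:ℝ) t then ((t, s) : ℝ × ℝ) else (2,1)).2 ∧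
        (if s ∈ Set.Ioo (0:ℝ) t then ((t,s) : ℝ × ℝ) else (2,1)).2
          < (if s ∈ Set.Ioo (0:ℝ) t then ((t,s):ℝ×ℝ) else (2,1)).1 := by
      intro s
      by_cases h : s ∈ Set.Ioo (0:ℝ) t
      · simp only [if_pos h]; exact ⟨h.1, h.2⟩
      · simp only [if_neg h]; norm_num
    have hgm : Measurable (fun s : ℝ => if s ∈ Set.Ioo (0:ℝ) t then ((t,s):ℝ×ℝ) else (2,1)) :=
      Measurable.ite measurableSet_Ioo (measurable_const.prodMk measurable_id) measurable_const
    have hem : Measurable (fun s : ℝ =>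
        (⟨_, hgmem s⟩ : {q : ℝ × ℝ // 0 < q.2 ∧ q.2 < q.1})) := hgm.subtype_mk
    have hT : ∀ u, StronglyMeasurable fun s : ℝ =>
        K (if s ∈ Set.Ioo (0:ℝ) t then ((t,s):ℝ×ℝ) else (2,1)).1
          (if s ∈ Set.Ioo (0:ℝ) t then ((t,s):ℝ×ℝ) else (2,1)).2 u :=
      fun u => (hKmeas u).comp_measurable hem
    have hsm : StronglyMeasurable fun s : ℝ =>
        K (if s ∈ Set.Ioo (0:ℝ) t then ((t,s):ℝ×ℝ) else (2,1)).1
          (if s ∈ Set.Ioo (0:ℝ) t then ((t,s):ℝ×ℝ) else (2,1)).2 (f s) :=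
      aux_clm_apply_sm _ hT f hf
    have hmeasK : AEStronglyMeasurable (fun s : ℝ => K t s (f s))
        (volume.restrict (Set.Ioo 0 t)) := by
      refine hsm.aestronglyMeasurable.congr ?_
      refine (ae_restrict_iff' measurableSet_Ioo).2 (Filter.Eventually.of_forall fun s hs => ?_)
      simp only [if_pos hs]
    -- finiteness of the integral of the norm
    have hJfin : (∫⁻ s in Set.Ioo (0:ℝ) t, ENNReal.ofReal ‖f s‖) ≠ ⊤ := by
      intro htop
      have h2 := hCS t ht
      rw [htop] at h2
      have htt : ((⊤:ℝ≥0∞) ^ (2:ℕ)) = ⊤ := by simp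
      rw [htt, top_le_iff] at h2
      exact (ENNReal.mul_lt_top
        (ENNReal.mul_lt_top ENNReal.ofReal_lt_top ENNReal.ofReal_lt_top) (hHtfin t ht)).ne h2
    have hfInt : IntegrableOn (fun s : ℝ => ‖f s‖) (Set.Ioo 0 t) volume := by
      refine ⟨hf.norm.aestronglyMeasurable.restrict, ?_⟩
      rw [hasFiniteIntegral_iff_norm]
      simp only [norm_norm]
      exact lt_top_iff_ne_top.2 hJfin
    have hKInt : IntegrableOn (fun s : ℝ => K t s (f s)) (Set.Ioo 0 t) volume := by
      refine ⟨hmeasK, ?_⟩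
      rw [hasFiniteIntegral_iff_norm]
      calc ∫⁻ s in Set.Ioo (0:ℝ) t, ENNReal.ofReal ‖K t s (f s)‖
          ≤ ∫⁻ s in Set.Ioo (0:ℝ) t, ENNReal.ofReal M * ENNReal.ofReal ‖f s‖ :=
            lintegral_mono_ae ((ae_restrict_iff' measurableSet_Ioo).2
              (Filter.Eventually.of_forall fun s hs => by
                rw [← ENNReal.ofReal_mul hM.le]
                exact ENNReal.ofReal_le_ofReal (hnorm t ht s hs)))
        _ = ENNReal.ofReal M * ∫⁻ s in Set.Ioo (0:ℝ) t, ENNReal.ofReal ‖f s‖ :=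
            lintegral_const_mul' _ _ ENNReal.ofReal_ne_top
        _ < ⊤ := ENNReal.mul_lt_top ENNReal.ofReal_lt_top (lt_top_iff_ne_top.2 hJfin)
    refine ⟨hKInt, ?_⟩
    calc ENNReal.ofReal ‖∫ s in Set.Ioo (0:ℝ) t, K t s (f s)‖
        ≤ ENNReal.ofReal (∫ s in Set.Ioo (0:ℝ) t, M * ‖f s‖) := by
          apply ENNReal.ofReal_le_ofReal
          refine (norm_integral_le_integral_norm _).trans ?_
          exact setIntegral_mono_on hKInt.norm (hfInt.const_mul M) measurableSet_Ioo
            (hnorm t ht)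
      _ = ENNReal.ofReal M * ∫⁻ s in Set.Ioo (0:ℝ) t, ENNReal.ofReal ‖f s‖ := by
          rw [ofReal_integral_eq_lintegral_ofReal (hfInt.const_mul M)
            (ae_of_all _ fun s => by positivity)]
          simp_rw [ENNReal.ofReal_mul hM.le]
          exact lintegral_const_mul' _ _ ENNReal.ofReal_ne_top
  -- the pointwise-in-t main estimate
  have hmain : ∀ t : ℝ, 0 < t →
      ENNReal.ofReal (‖∫ s in Set.Ioo (0:ℝ) t, K t s (f s)‖ ^ 2 * t ^ (-3 - σ))
        ≤ ENNReal.ofReal (M ^ 2) *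
            (ENNReal.ofReal (t ^ (α - 2 - σ)) *
              ∫⁻ s in Set.Ioo (0:ℝ) t, ENNReal.ofReal (‖f s‖ ^ 2 * s ^ (-α))) := by
    intro t ht
    have h1 := (hKey t ht).2
    have h2 := hCS t ht
    have pow2 := pow_le_pow_left' h1 2
    have hw : ENNReal.ofReal (t ^ α) * ENNReal.ofReal t * ENNReal.ofReal (t ^ (-3-σ))
        = ENNReal.ofReal (t ^ (α - 2 - σ)) := by
      rw [← ENNReal.ofReal_mul (by positivity), ← ENNReal.ofReal_mul (by positivity)]
      congr 1
      rw [← Real.rpow_add_one ht.ne', ← Real.rpow_add ht]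
      congr 1
      ring
    calc ENNReal.ofReal (‖∫ s in Set.Ioo (0:ℝ) t, K t s (f s)‖ ^ 2 * t ^ (-3 - σ))
        = ENNReal.ofReal ‖∫ s in Set.Ioo (0:ℝ) t, K t s (f s)‖ ^ 2
            * ENNReal.ofReal (t ^ (-3 - σ)) := by
          rw [ENNReal.ofReal_mul (by positivity), ENNReal.ofReal_pow (norm_nonneg _)]
      _ ≤ (ENNReal.ofReal M * ∫⁻ s in Set.Ioo (0:ℝ) t, ENNReal.ofReal ‖f s‖) ^ 2
            * ENNReal.ofReal (t ^ (-3 - σ)) := mul_le_mul_left pow2 _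
      _ = ENNReal.ofReal M ^ 2 * ((∫⁻ s in Set.Ioo (0:ℝ) t, ENNReal.ofReal ‖f s‖) ^ 2)
            * ENNReal.ofReal (t ^ (-3 - σ)) := by ring
      _ ≤ ENNReal.ofReal M ^ 2 * ((ENNReal.ofReal (t ^ α) * ENNReal.ofReal t) *
            ∫⁻ s in Set.Ioo (0:ℝ) t, ENNReal.ofReal (‖f s‖ ^ 2 * s ^ (-α)))
            * ENNReal.ofReal (t ^ (-3 - σ)) :=
          mul_le_mul_left (mul_le_mul_right h2 _) _
      _ = ENNReal.ofReal (M ^ 2) *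
            (ENNReal.ofReal (t ^ (α - 2 - σ)) *
              ∫⁻ s in Set.Ioo (0:ℝ) t, ENNReal.ofReal (‖f s‖ ^ 2 * s ^ (-α))) := by
          rw [ENNReal.ofReal_pow hM.le, ← hw]
          ring
  -- the double-integral function for Tonelli
  set Φ : ℝ → ℝ → ℝ≥0∞ := fun t s =>
    Set.indicator {p : ℝ × ℝ | 0 < p.2 ∧ p.2 < p.1}
      (fun p => ENNReal.ofReal (p.1 ^ (α - 2 - σ)) *
        ENNReal.ofReal (‖f p.2‖ ^ 2 * p.2 ^ (-α))) (t, s) with hΦ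
  have hSmeas : MeasurableSet {p : ℝ × ℝ | 0 < p.2 ∧ p.2 < p.1} :=
    (measurableSet_lt measurable_const measurable_snd).inter
      (measurableSet_lt measurable_snd measurable_fst)
  have hΦmeas : AEMeasurable (Function.uncurry Φ)
      ((volume.restrict (Set.Ioi (0:ℝ))).prod (volume.restrict (Set.Ioi (0:ℝ)))) := by
    have : Function.uncurry Φ = Set.indicator {p : ℝ × ℝ | 0 < p.2 ∧ p.2 < p.1}
        (fun p => ENNReal.ofReal (p.1 ^ (α - 2 - σ)) *
          ENNReal.ofReal (‖f p.2‖ ^ 2 * p.2 ^ (-α))) := by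
      funext p
      simp [hΦ, Function.uncurry]
    rw [this]
    exact (((((measurable_fst.pow measurable_const).ennreal_ofReal)).mul
      ((((hf.norm.measurable.pow_const 2).mul
        (measurable_id.pow measurable_const)).ennreal_ofReal).comp measurable_snd)).indicator
        hSmeas).aemeasurable
  have hA : ∀ t : ℝ, (∫⁻ s in Set.Ioi (0:ℝ), Φ t s)
      = ENNReal.ofReal (t ^ (α - 2 - σ)) *
          ∫⁻ s in Set.Ioo (0:ℝ) t, ENNReal.ofReal (‖f s‖ ^ 2 * s ^ (-α)) := by
    intro t
    have e : ∀ s : ℝ, Φ t s = (Set.Ioo (0:ℝ) t).indicator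
        (fun s => ENNReal.ofReal (t ^ (α - 2 - σ)) *
          ENNReal.ofReal (‖f s‖ ^ 2 * s ^ (-α))) s := by
      intro s
      simp only [hΦ]
      by_cases h : s ∈ Set.Ioo (0:ℝ) t
      · rw [Set.indicator_of_mem
          (show ((t,s) : ℝ×ℝ) ∈ {p : ℝ × ℝ | 0 < p.2 ∧ p.2 < p.1} from ⟨h.1, h.2⟩),
          Set.indicator_of_mem h]
      · rw [Set.indicator_of_notMem
          (show ((t,s) : ℝ×ℝ) ∉ {p : ℝ × ℝ | 0 < p.2 ∧ p.2 < p.1} from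
            fun hc => h ⟨hc.1, hc.2⟩), Set.indicator_of_notMem h]
    simp_rw [e]
    rw [lintegral_indicator measurableSet_Ioo, Measure.restrict_restrict measurableSet_Ioo,
      Set.inter_eq_self_of_subset_left Set.Ioo_subset_Ioi_self,
      lintegral_const_mul' _ _ ENNReal.ofReal_ne_top]
  have hB : ∀ s ∈ Set.Ioi (0:ℝ), (∫⁻ t in Set.Ioi (0:ℝ), Φ t s)
      = ENNReal.ofReal (2 / (1 + σ)) * ENNReal.ofReal (‖f s‖ ^ 2 * s ^ (-1 - σ)) := by
    intro s hs
    have hs0 : (0:ℝ) < s := hs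
    have e : ∀ t : ℝ, Φ t s = (Set.Ioi s).indicator
        (fun t => ENNReal.ofReal (t ^ (α - 2 - σ))) t *
          ENNReal.ofReal (‖f s‖ ^ 2 * s ^ (-α)) := by
      intro t
      simp only [hΦ]
      by_cases h : s < t
      · rw [Set.indicator_of_mem
          (show ((t,s) : ℝ×ℝ) ∈ {p : ℝ × ℝ | 0 < p.2 ∧ p.2 < p.1} from ⟨hs0, h⟩),
          Set.indicator_of_mem (show t ∈ Set.Ioi s from h)]
      · rw [Set.indicator_of_notMem
          (show ((t,s) : ℝ×ℝ) ∉ {p : ℝ × ℝ | 0 < p.2 ∧ p.2 < p.1} from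
            fun hc => h hc.2), Set.indicator_of_notMem (show t ∉ Set.Ioi s from h), zero_mul]
    simp_rw [e]
    rw [lintegral_mul_const' _ _ ENNReal.ofReal_ne_top,
      lintegral_indicator measurableSet_Ioi, Measure.restrict_restrict measurableSet_Ioi,
      Set.inter_eq_self_of_subset_left (Set.Ioi_subset_Ioi hs0.le)]
    have hb : α - 2 - σ < -1 := by rw [hα]; linarith
    have htail : (∫⁻ t in Set.Ioi s, ENNReal.ofReal (t ^ (α - 2 - σ)))
        = ENNReal.ofReal (s ^ (-α) / α) := by
      rw [← ofReal_integral_eq_lintegral_ofReal (integrableOn_Ioi_rpow_of_lt hb hs0)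
        ((ae_restrict_iff' measurableSet_Ioi).2 (Filter.Eventually.of_forall fun x hx =>
          Real.rpow_nonneg (hs0.trans hx).le _))]
      rw [integral_Ioi_rpow_of_lt hb hs0]
      congr 1
      have h1 : α - 2 - σ + 1 = -α := by rw [hα]; ring
      rw [h1, neg_div_neg_eq]
    rw [htail, ← ENNReal.ofReal_mul (show (0:ℝ) ≤ s ^ (-α) / α by positivity),
      ← ENNReal.ofReal_mul (div_nonneg two_pos.le h1σ.le)]
    refine congrArg ENNReal.ofReal ?_
    have hss : s ^ (-α) * s ^ (-α) = s ^ (-1 - σ) := by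
      rw [← Real.rpow_add hs0]
      congr 1
      rw [hα]; ring
    have h1σ' : (1 + σ) ≠ 0 := ne_of_gt h1σ
    calc s ^ (-α) / α * (‖f s‖ ^ 2 * s ^ (-α))
        = ‖f s‖ ^ 2 * (s ^ (-α) * s ^ (-α)) / α := by ring
      _ = 2 / (1 + σ) * (‖f s‖ ^ 2 * s ^ (-1 - σ)) := by
          rw [hss, hα, div_eq_mul_inv, inv_div]; ring
  refine ⟨fun t ht => (hKey t ht).1, ?_⟩
  calc ∫⁻ t in Set.Ioi (0:ℝ),
        ENNReal.ofReal (‖∫ s in Set.Ioo (0:ℝ) t, K t s (f s)‖ ^ 2 * t ^ (-3 - σ))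
      ≤ ∫⁻ t in Set.Ioi (0:ℝ), ENNReal.ofReal (M ^ 2) *
          (ENNReal.ofReal (t ^ (α - 2 - σ)) *
            ∫⁻ s in Set.Ioo (0:ℝ) t, ENNReal.ofReal (‖f s‖ ^ 2 * s ^ (-α))) :=
        lintegral_mono_ae ((ae_restrict_iff' measurableSet_Ioi).2
          (Filter.Eventually.of_forall fun t ht => hmain t ht))
    _ = ENNReal.ofReal (M ^ 2) * ∫⁻ t in Set.Ioi (0:ℝ),
          (ENNReal.ofReal (t ^ (α - 2 - σ)) *
            ∫⁻ s in Set.Ioo (0:ℝ) t, ENNReal.ofReal (‖f s‖ ^ 2 * s ^ (-α))) :=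
        lintegral_const_mul' _ _ ENNReal.ofReal_ne_top
    _ = ENNReal.ofReal (M ^ 2) * ∫⁻ t in Set.Ioi (0:ℝ), ∫⁻ s in Set.Ioi (0:ℝ), Φ t s := by
        rw [lintegral_congr fun t => (hA t).symm]
    _ = ENNReal.ofReal (M ^ 2) * ∫⁻ s in Set.Ioi (0:ℝ), ∫⁻ t in Set.Ioi (0:ℝ), Φ t s := by
        rw [lintegral_lintegral_swap hΦmeas]
    _ = ENNReal.ofReal (M ^ 2) * ∫⁻ s in Set.Ioi (0:ℝ),
          ENNReal.ofReal (2 / (1 + σ)) * ENNReal.ofReal (‖f s‖ ^ 2 * s ^ (-1 - σ)) := by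
        rw [setLIntegral_congr_fun_ae measurableSet_Ioi
          (Filter.Eventually.of_forall fun s hs => hB s hs)]
    _ = ENNReal.ofReal (2 / (1 + σ) * M ^ 2) *
          ∫⁻ s in Set.Ioi (0:ℝ), ENNReal.ofReal (‖f s‖ ^ 2 * s ^ (-1 - σ)) := by
        rw [lintegral_const_mul' _ _ ENNReal.ofReal_ne_top, ← mul_assoc,
          ← ENNReal.ofReal_mul (by positivity), mul_comm (M ^ 2)]
end

section
/- Let E and F be Banach spaces with E separable, let (Ω,𝔉) be a measurable space, and let C > 0. Let Λ : Ω → L(E,F) be a map into the bounded linear operators from E to F such that: (i) for every x ∈ E the map ω ↦ Λ(ω)x is measurable; (ii) for every ω ∈ Ω the operator Λ(ω) is bijective; and (iii) ‖x‖_E ≤ C ‖Λ(ω)x‖_F for all ω ∈ Ω and all x ∈ E. Then for every y ∈ F the map ω ↦ Λ(ω)^{-1} y is measurable from Ω to E. -/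
open MeasureTheory

/-- **Strong measurability of the inverse of a strongly measurable operator-valued map**
(Step 1 of the proof of Theorem 3.5 of Portal–Veraar): if `Λ : Ω → L(E,F)` is strongly
measurable, each `Λ(ω)` is bijective and `‖x‖ ≤ C ‖Λ(ω)x‖` uniformly in `ω`, then for
every `y ∈ F` the map `ω ↦ Λ(ω)⁻¹ y` is measurable. -/
theorem measurable_inverse_operator
    (E : Type*) [NormedAddCommGroup E] [NormedSpace ℝ E] [CompleteSpace E]
    [TopologicalSpace.SeparableSpace E] [MeasurableSpace E] [BorelSpace E]
    (F : Type*) [NormedAddCommGroup F] [NormedSpace ℝ F] [CompleteSpace F]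
    (Ω : Type*) [MeasurableSpace Ω]
    (C : ℝ) (hC : 0 < C)
    (Λ : Ω → E →L[ℝ] F)
    (hmeas : ∀ x : E, StronglyMeasurable fun ω => Λ ω x)
    (hbij : ∀ ω, Function.Bijective (Λ ω))
    (hbound : ∀ ω (x : E), ‖x‖ ≤ C * ‖Λ ω x‖) :
    ∀ y : F, Measurable fun ω => (Equiv.ofBijective (Λ ω) (hbij ω)).symm y := by
  classical
  intro y
  haveI : Nonempty E := ⟨0⟩
  set d := TopologicalSpace.denseSeq E with hd_def
  have hd : DenseRange d := TopologicalSpace.denseRange_denseSeq E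
  set f : Ω → E := fun ω => (Equiv.ofBijective (Λ ω) (hbij ω)).symm y with hf
  have hfy : ∀ ω, Λ ω (f ω) = y := fun ω =>
    (Equiv.ofBijective (Λ ω) (hbij ω)).apply_symm_apply y
  have hex : ∀ n : ℕ, ∀ ω, ∃ k, ‖y - Λ ω (d k)‖ < 1 / (n + 1) := by
    intro n ω
    have hN : (0:ℝ) < ‖Λ ω‖ + 1 := by positivity
    obtain ⟨k, hk⟩ := Metric.denseRange_iff.mp hd (f ω) ((1 / (n + 1)) / (‖Λ ω‖ + 1))
      (by positivity)
    refine ⟨k, ?_⟩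
    have heq : y - Λ ω (d k) = Λ ω (f ω - d k) := by rw [map_sub, hfy]
    rw [heq]
    calc ‖Λ ω (f ω - d k)‖ ≤ ‖Λ ω‖ * ‖f ω - d k‖ := (Λ ω).le_opNorm _
      _ ≤ (‖Λ ω‖ + 1) * ‖f ω - d k‖ := by nlinarith [norm_nonneg (f ω - d k)]
      _ < (‖Λ ω‖ + 1) * ((1 / (n + 1)) / (‖Λ ω‖ + 1)) := by
          apply mul_lt_mul_of_pos_left _ hN
          rwa [← dist_eq_norm]
      _ = 1 / (n + 1) := by field_simp
  have hmeasg : ∀ n : ℕ, Measurable fun ω => d (Nat.find (hex n ω)) := by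
    intro n
    apply Measurable.find (f := fun k _ => d k)
      (p := fun k ω => ‖y - Λ ω (d k)‖ < 1 / (n + 1))
    · exact fun k => measurable_const
    · intro k
      have hm : Measurable fun ω => ‖y - Λ ω (d k)‖ :=
        (stronglyMeasurable_const.sub (hmeas (d k))).norm.measurable
      exact measurableSet_lt hm measurable_const
  have hlim : Filter.Tendsto (fun n : ℕ => fun ω => d (Nat.find (hex n ω)))
      Filter.atTop (nhds f) := by
    rw [tendsto_pi_nhds]
    intro ω
    rw [tendsto_iff_dist_tendsto_zero]
    have hb : ∀ n : ℕ, dist (d (Nat.find (hex n ω))) (f ω) ≤ C * (1 / (n + 1)) := by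
      intro n
      have hk := Nat.find_spec (hex n ω)
      have h1 : ‖d (Nat.find (hex n ω)) - f ω‖ ≤ C * ‖Λ ω (d (Nat.find (hex n ω)) - f ω)‖ :=
        hbound ω _
      have h2 : Λ ω (d (Nat.find (hex n ω)) - f ω) = -(y - Λ ω (d (Nat.find (hex n ω)))) := by
        rw [map_sub, hfy]; abel
      rw [dist_eq_norm]
      calc ‖d (Nat.find (hex n ω)) - f ω‖ ≤ C * ‖Λ ω (d (Nat.find (hex n ω)) - f ω)‖ := h1
        _ = C * ‖y - Λ ω (d (Nat.find (hex n ω)))‖ := by rw [h2, norm_neg]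
        _ ≤ C * (1 / (n + 1)) := by
            exact mul_le_mul_of_nonneg_left hk.le hC.le
    have hz : Filter.Tendsto (fun n : ℕ => C * (1 / (n + 1 : ℝ))) Filter.atTop (nhds 0) := by
      have := tendsto_one_div_add_atTop_nhds_zero_nat (𝕜 := ℝ)
      simpa using (this.const_mul C).congr (fun n => by ring)
    refine squeeze_zero (fun n => dist_nonneg) hb ?_
    simpa using hz
  exact measurable_of_tendsto_metrizable hmeasg hlim
end
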